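/- Let G be a finite simple undirected graph on n ≥ 3 vertices with at least one edge in which every vertex has degree at least 1. Then the local leverage satisfies μ_L/μ_D ≤ ((n−1)² + 1)/(2(n−1)), and equality holds for the star graph K_{1,n−1}. Hence no graph on n vertices with minimum degree at least 1 has higher local leverage than the star network. -/

import Mathlib

open Finset

variable {V : Type*}

/-- Set of neighbors of `v` as a `Finset` (classical). -/
noncomputable def nbr (G : SimpleGraph V) [Fintype V] (v : V) : Finset V :=
  haveI := Classical.decRel G.Adj
  G.neighborFinset v

/-- Degree of vertex `v`: number of its neighbors. -/
noncomputable def deg (G : SimpleGraph V) [Fintype V] (v : V) : ℕ :=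
  (nbr G v).card

/-- Average degree of the friends of `v`. -/
noncomputable def friendAvg (G : SimpleGraph V) [Fintype V] (v : V) : ℝ :=
  (∑ j ∈ nbr G v, (deg G j : ℝ)) / (deg G v : ℝ)

/-- Mean degree of the network. -/
noncomputable def meanDeg (G : SimpleGraph V) [Fintype V] : ℝ :=
  (∑ i : V, (deg G i : ℝ)) / (Fintype.card V : ℝ)

/-- Local mean: average over vertices of the average friend degree. -/
noncomputable def localMean (G : SimpleGraph V) [Fintype V] : ℝ :=
  (∑ i : V, friendAvg G i) / (Fintype.card V : ℝ)

/-- Global mean: total number of friends of friends over total number of friends. -/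
noncomputable def globalMean (G : SimpleGraph V) [Fintype V] : ℝ :=
  (∑ i : V, ∑ j ∈ nbr G i, (deg G j : ℝ)) / (∑ i : V, (deg G i : ℝ))

/-- Number of (undirected) edges. -/
noncomputable def edgeCount (G : SimpleGraph V) [Fintype V] : ℕ :=
  Nat.card G.edgeSet

/-- m-th moment of the degree distribution. -/
noncomputable def kappa (G : SimpleGraph V) [Fintype V] (m : ℤ) : ℝ :=
  (∑ i : V, (deg G i : ℝ) ^ m) / (Fintype.card V : ℝ)

/-- The star graph on `Fin n`: the center is `0`, adjacent to every other vertex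
(the leaves), with no other edges. -/
def starGraph (n : ℕ) : SimpleGraph (Fin n) where
  Adj i j := i ≠ j ∧ (i.val = 0 ∨ j.val = 0)
  symm := ⟨fun i j ⟨h1, h2⟩ => ⟨h1.symm, h2.symm⟩⟩
  loopless := ⟨fun i ⟨h1, _⟩ => h1 rfl⟩


section Aux

lemma mem_nbr (G : SimpleGraph V) [Fintype V] {i j : V} :
    j ∈ nbr G i ↔ G.Adj i j := by
  simp [nbr, SimpleGraph.mem_neighborFinset]

lemma aux_deg_lt (G : SimpleGraph V) [Fintype V] (i : V) :
    deg G i < Fintype.card V := by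
  classical
  have h : nbr G i ⊆ univ.erase i := fun j hj =>
    mem_erase.2 ⟨(G.ne_of_adj ((mem_nbr G).1 hj)).symm, mem_univ j⟩
  have h2 := Finset.card_le_card h
  rw [Finset.card_erase_of_mem (mem_univ i), Finset.card_univ] at h2
  have hpos : 0 < Fintype.card V := Fintype.card_pos_iff.2 ⟨i⟩
  unfold deg; omega

lemma nbr_eq_filter (G : SimpleGraph V) [Fintype V] [DecidableRel G.Adj]
    (i : V) : nbr G i = univ.filter (fun j => G.Adj i j) := by
  ext j; simp [mem_nbr]

lemma sum_swap_nbr (G : SimpleGraph V) [Fintype V] (f : V → V → ℝ) :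
    ∑ i, ∑ j ∈ nbr G i, f i j = ∑ i, ∑ j ∈ nbr G i, f j i := by
  classical
  simp only [nbr_eq_filter, Finset.sum_filter]
  rw [Finset.sum_comm]
  refine Finset.sum_congr rfl fun i _ => Finset.sum_congr rfl fun j _ => ?_
  by_cases h : G.Adj i j
  · rw [if_pos (G.adj_symm h), if_pos h]
  · rw [if_neg (fun h' => h (G.adj_symm h')), if_neg h]

lemma ratio_bound {x y K : ℝ} (hx1 : 1 ≤ x) (hxK : x ≤ K) (hy1 : 1 ≤ y) (hyK : y ≤ K) :
    x / y + y / x ≤ K + 1 / K := by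
  have hx : (0:ℝ) < x := by linarith
  have hy : (0:ℝ) < y := by linarith
  have hK : (0:ℝ) < K := by linarith
  have h1 : (K*x - y) * (K*y - x) ≥ 0 := mul_nonneg (by nlinarith) (by nlinarith)
  have h2 : x/y + y/x = (x^2 + y^2)/(x*y) := by field_simp
  have h3 : K + 1/K = (K^2+1)/K := by field_simp
  rw [h2, h3, div_le_div_iff₀ (by positivity) hK]
  nlinarith

lemma main_ineq [Fintype V] (G : SimpleGraph V)
    (hn : 3 ≤ Fintype.card V) (hdeg : ∀ v : V, 1 ≤ deg G v) :
    localMean G / meanDeg G ≤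
      (((Fintype.card V : ℝ) - 1) ^ 2 + 1) / (2 * ((Fintype.card V : ℝ) - 1)) := by
  classical
  haveI : Nonempty V := Fintype.card_pos_iff.mp (by omega)
  set K : ℝ := (Fintype.card V : ℝ) - 1 with hKdef
  have hn3 : (3:ℝ) ≤ (Fintype.card V : ℝ) := by exact_mod_cast hn
  have hKpos : (0:ℝ) < K := by rw [hKdef]; linarith
  have hd1 : ∀ i : V, (1:ℝ) ≤ (deg G i : ℝ) := fun i => by exact_mod_cast hdeg i
  have hdK : ∀ i : V, (deg G i : ℝ) ≤ K := by
    intro i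
    have h := aux_deg_lt G i
    have h' : (deg G i : ℝ) + 1 ≤ (Fintype.card V : ℝ) := by exact_mod_cast h
    rw [hKdef]; linarith
  have hdpos : ∀ i : V, (0:ℝ) < (deg G i : ℝ) := fun i => lt_of_lt_of_le one_pos (hd1 i)
  set F : ℝ := ∑ i : V, friendAvg G i with hFdef
  set D : ℝ := ∑ i : V, (deg G i : ℝ) with hDdef
  have hDpos : 0 < D := Finset.sum_pos (fun i _ => hdpos i) Finset.univ_nonempty
  have hS : F = ∑ i : V, ∑ j ∈ nbr G i, (deg G j : ℝ) / (deg G i : ℝ) :=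
    Finset.sum_congr rfl fun i _ => by rw [friendAvg, Finset.sum_div]
  have hswap := sum_swap_nbr G (fun i j => (deg G j : ℝ) / (deg G i : ℝ))
  have h2 : F + F = ∑ i : V, ∑ j ∈ nbr G i,
      ((deg G j : ℝ) / (deg G i : ℝ) + (deg G i : ℝ) / (deg G j : ℝ)) := by
    rw [hS]
    nth_rewrite 2 [hswap]
    rw [← Finset.sum_add_distrib]
    exact Finset.sum_congr rfl fun i _ => (Finset.sum_add_distrib).symm
  have hbound : F + F ≤ (K + 1/K) * D := by
    rw [h2, hDdef, Finset.mul_sum]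
    apply Finset.sum_le_sum
    intro i _
    calc ∑ j ∈ nbr G i, ((deg G j : ℝ) / (deg G i : ℝ) + (deg G i : ℝ) / (deg G j : ℝ))
        ≤ ∑ _j ∈ nbr G i, (K + 1/K) :=
          Finset.sum_le_sum fun j _ => ratio_bound (hd1 j) (hdK j) (hd1 i) (hdK i)
      _ = (K + 1/K) * (deg G i : ℝ) := by
          rw [Finset.sum_const, nsmul_eq_mul, mul_comm]; rfl
  have hratio : localMean G / meanDeg G = F / D := by
    rw [localMean, meanDeg, ← hFdef, ← hDdef, div_div_div_eq, mul_comm F (Fintype.card V : ℝ),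
      mul_div_mul_left _ _ (by linarith : (Fintype.card V:ℝ) ≠ 0)]
  rw [hratio, div_le_div_iff₀ hDpos (by positivity)]
  have hKK : (K + 1/K) * K = K^2 + 1 := by
    field_simp [hKpos.ne']
  have h3 : (K + 1/K) * D * K = (K^2 + 1) * D := by
    calc (K + 1/K) * D * K = ((K + 1/K) * K) * D := by ring
      _ = (K^2 + 1) * D := by rw [hKK]
  have h4 := mul_le_mul_of_nonneg_right hbound hKpos.le
  rw [h3] at h4
  rw [show F * (2*K) = (F+F)*K from by ring]
  exact h4

lemma nbr_star_zero (n : ℕ) [NeZero n] : nbr (starGraph n) 0 = univ.erase 0 := by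
  ext j
  rw [mem_nbr, Finset.mem_erase]
  constructor
  · rintro ⟨h, -⟩; exact ⟨Ne.symm h, mem_univ j⟩
  · rintro ⟨h, -⟩; exact ⟨Ne.symm h, Or.inl rfl⟩

lemma nbr_star_ne (n : ℕ) [NeZero n] (i : Fin n) (hi : i ≠ 0) :
    nbr (starGraph n) i = {0} := by
  ext j
  rw [mem_nbr, Finset.mem_singleton]
  constructor
  · rintro ⟨hne, h | h⟩
    · exact absurd (Fin.ext h : i = 0) hi
    · exact Fin.ext h
  · rintro rfl; exact ⟨hi, Or.inr rfl⟩

lemma deg_star_zero (n : ℕ) [NeZero n] : deg (starGraph n) 0 = n - 1 := by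
  rw [deg, nbr_star_zero, Finset.card_erase_of_mem (mem_univ 0), Finset.card_univ,
    Fintype.card_fin]

lemma deg_star_ne (n : ℕ) [NeZero n] (i : Fin n) (hi : i ≠ 0) :
    deg (starGraph n) i = 1 := by
  rw [deg, nbr_star_ne n i hi, Finset.card_singleton]

lemma star_ratio (n : ℕ) (hn : 3 ≤ n) :
    localMean (starGraph n) / meanDeg (starGraph n)
      = (((n : ℝ) - 1) ^ 2 + 1) / (2 * ((n : ℝ) - 1)) := by
  haveI : NeZero n := ⟨by omega⟩
  have hn3 : (3:ℝ) ≤ (n:ℝ) := by exact_mod_cast hn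
  have hK : (0:ℝ) < (n:ℝ) - 1 := by linarith
  have hd0 : (deg (starGraph n) 0 : ℝ) = (n:ℝ) - 1 := by
    rw [deg_star_zero, Nat.cast_sub (by omega), Nat.cast_one]
  have hcardE : ((univ.erase (0 : Fin n)).card : ℝ) = (n:ℝ) - 1 := by
    rw [Finset.card_erase_of_mem (mem_univ 0), Finset.card_univ, Fintype.card_fin,
      Nat.cast_sub (by omega), Nat.cast_one]
  have hsumE : ∑ j ∈ univ.erase (0 : Fin n), (deg (starGraph n) j : ℝ) = (n:ℝ) - 1 := by
    rw [Finset.sum_congr rfl (fun i hi => by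
      rw [deg_star_ne n i (Finset.mem_erase.1 hi).1] : ∀ i ∈ univ.erase (0:Fin n),
        ((deg (starGraph n) i : ℝ)) = ((1:ℕ):ℝ))]
    rw [Finset.sum_const, nsmul_eq_mul, Nat.cast_one, mul_one, hcardE]
  have hF0 : friendAvg (starGraph n) 0 = 1 := by
    rw [friendAvg, nbr_star_zero, hsumE, hd0, div_self hK.ne']
  have hFi : ∀ i : Fin n, i ≠ 0 → friendAvg (starGraph n) i = (n:ℝ) - 1 := by
    intro i hi
    rw [friendAvg, nbr_star_ne n i hi, deg_star_ne n i hi, Finset.sum_singleton, hd0,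
      Nat.cast_one, div_one]
  have hSD : ∑ i : Fin n, (deg (starGraph n) i : ℝ) = 2 * ((n:ℝ) - 1) := by
    rw [← Finset.add_sum_erase _ _ (mem_univ (0:Fin n)), hd0, hsumE]; ring
  have hSF : ∑ i : Fin n, friendAvg (starGraph n) i = 1 + ((n:ℝ) - 1) ^ 2 := by
    rw [← Finset.add_sum_erase _ _ (mem_univ (0:Fin n)), hF0,
      Finset.sum_congr rfl (fun i hi => hFi i (Finset.mem_erase.1 hi).1),
      Finset.sum_const, nsmul_eq_mul, hcardE]; ring
  have hnpos : (0:ℝ) < (n:ℝ) := by linarith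
  rw [localMean, meanDeg, hSF, hSD, Fintype.card_fin]
  rw [div_div_div_eq, div_eq_div_iff (by positivity) (by positivity)]
  ring

end Aux

/-- For any graph on `n ≥ 3` vertices with at least one edge and minimum degree at
least 1, the local leverage satisfies `μ_L/μ_D ≤ ((n-1)² + 1)/(2(n-1))`, and equality
holds for the star graph `K_{1,n-1}`: no such graph has higher local leverage than the
star network. -/
theorem stmt18 {V : Type*} [Fintype V] (G : SimpleGraph V)
    (hn : 3 ≤ Fintype.card V) (hE : G.edgeSet.Nonempty) (hdeg : ∀ v : V, 1 ≤ deg G v) :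
    localMean G / meanDeg G ≤
        (((Fintype.card V : ℝ) - 1) ^ 2 + 1) / (2 * ((Fintype.card V : ℝ) - 1)) ∧
      ∀ n : ℕ, 3 ≤ n →
        localMean (starGraph n) / meanDeg (starGraph n)
          = (((n : ℝ) - 1) ^ 2 + 1) / (2 * ((n : ℝ) - 1)) := by
  exact ⟨main_ineq G hn hdeg, fun n hn' => star_ratio n hn'⟩
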